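/- On the unit sphere S², suppose a triangle has vertices ȳ, p̄', z̄ with side lengths l₁' = d(p̄',ȳ), l₂' = d(p̄',z̄), l₀' = d(ȳ,z̄) satisfying l₀' ≥ l₁' + l₂' − 3ε, with 0 < l₁', l₂' < π/2 and 3ε < l₁' + l₂' < π. Then the angle at p̄' satisfies cos∠p̄' < −cos 3ε + (cot l₁' + cot l₂') sin 3ε + cot l₁' · cot l₂' · (1 − cos 3ε). -/

import Mathlib

set_option maxHeartbeats 800000


open Real
open Real

/-- Geodesic (great-circle) distance between unit vectors of `ℝ³`, i.e. on `S²(1)`. -/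
noncomputable def sDist (x y : EuclideanSpace ℝ (Fin 3)) : ℝ := InnerProductGeometry.angle x y

/-- The spherical angle at the vertex `m` of the geodesic triangle `(a, m, b)` on `S²(1)`:
the angle between the projections of `a` and `b` to the tangent plane at `m`. -/
noncomputable def sAngle (m a b : EuclideanSpace ℝ (Fin 3)) : ℝ :=
  InnerProductGeometry.angle (a - (inner ℝ a m : ℝ) • m) (b - (inner ℝ b m : ℝ) • m)

/-- On `S²(1)`: for a triangle with vertices `ȳ, p̄', z̄` and sides
`l₁' = d(p̄',ȳ)`, `l₂' = d(p̄',z̄)`, `l₀' = d(ȳ,z̄)` with `l₀' ≥ l₁' + l₂' − 3ε`,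
`0 < l₁', l₂' < π/2` and `3ε < l₁' + l₂' < π`, the angle at `p̄'` satisfies
`cos ∠p̄' < −cos 3ε + (cot l₁' + cot l₂')·sin 3ε + cot l₁'·cot l₂'·(1 − cos 3ε)`. -/
theorem sphere_thm_stmt7 (y p' z : EuclideanSpace ℝ (Fin 3))
    (hy : ‖y‖ = 1) (hp' : ‖p'‖ = 1) (hz : ‖z‖ = 1) (ε : ℝ) (hε : 0 < ε)
    (l₁' l₂' l₀' : ℝ) (hl₁ : l₁' = sDist p' y) (hl₂ : l₂' = sDist p' z)
    (hl₀ : l₀' = sDist y z)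
    (h₁ : 0 < l₁') (h₁' : l₁' < π / 2) (h₂ : 0 < l₂') (h₂' : l₂' < π / 2)
    (h3ε : 3 * ε < l₁' + l₂') (hsum : l₁' + l₂' < π)
    (hdeg : l₁' + l₂' - 3 * ε ≤ l₀') :
    Real.cos (sAngle p' y z) <
      -Real.cos (3 * ε) + (Real.cot l₁' + Real.cot l₂') * Real.sin (3 * ε) +
        Real.cot l₁' * Real.cot l₂' * (1 - Real.cos (3 * ε)) := by
  have hpi := Real.pi_pos
  have hp2 : (inner ℝ p' p' : ℝ) = 1 := by
    rw [real_inner_self_eq_norm_sq, hp']; norm_num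
  set c₁ : ℝ := inner ℝ p' y with hc₁
  set c₂ : ℝ := inner ℝ p' z with hc₂
  set c₀ : ℝ := inner ℝ y z with hc₀
  have hcos1 : Real.cos l₁' = c₁ := by
    rw [hl₁, sDist, InnerProductGeometry.cos_angle, hp', hy]; simp [hc₁]
  have hcos2 : Real.cos l₂' = c₂ := by
    rw [hl₂, sDist, InnerProductGeometry.cos_angle, hp', hz]; simp [hc₂]
  have hcos0 : Real.cos l₀' = c₀ := by
    rw [hl₀, sDist, InnerProductGeometry.cos_angle, hy, hz]; simp [hc₀]
  have hl1pi : l₁' < π := by linarith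
  have hl2pi : l₂' < π := by linarith
  have hs1 : Real.sin l₁' = Real.sqrt (1 - c₁ ^ 2) := by
    rw [Real.sin_eq_sqrt_one_sub_cos_sq h₁.le hl1pi.le, hcos1]
  have hs2 : Real.sin l₂' = Real.sqrt (1 - c₂ ^ 2) := by
    rw [Real.sin_eq_sqrt_one_sub_cos_sq h₂.le hl2pi.le, hcos2]
  have hs1pos : 0 < Real.sin l₁' := Real.sin_pos_of_pos_of_lt_pi h₁ hl1pi
  have hs2pos : 0 < Real.sin l₂' := Real.sin_pos_of_pos_of_lt_pi h₂ hl2pi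
  have hc1pos : 0 < c₁ := by rw [← hcos1]; exact Real.cos_pos_of_mem_Ioo ⟨by linarith, h₁'⟩
  have hc2pos : 0 < c₂ := by rw [← hcos2]; exact Real.cos_pos_of_mem_Ioo ⟨by linarith, h₂'⟩
  -- projected vectors
  set a : EuclideanSpace ℝ (Fin 3) := y - (inner ℝ y p' : ℝ) • p' with ha
  set b : EuclideanSpace ℝ (Fin 3) := z - (inner ℝ z p' : ℝ) • p' with hb
  have hyp : (inner ℝ y p' : ℝ) = c₁ := by rw [hc₁, real_inner_comm]
  have hzp : (inner ℝ z p' : ℝ) = c₂ := by rw [hc₂, real_inner_comm]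
  have hna2 : ‖a‖ ^ 2 = 1 - c₁ ^ 2 := by
    rw [ha, ← real_inner_self_eq_norm_sq]
    simp only [inner_sub_left, inner_sub_right, real_inner_smul_left, real_inner_smul_right,
      hp2, hyp]
    rw [← hc₁, real_inner_self_eq_norm_sq, hy]; ring
  have hnb2 : ‖b‖ ^ 2 = 1 - c₂ ^ 2 := by
    rw [hb, ← real_inner_self_eq_norm_sq]
    simp only [inner_sub_left, inner_sub_right, real_inner_smul_left, real_inner_smul_right,
      hp2, hzp]
    rw [← hc₂, real_inner_self_eq_norm_sq, hz]; ring
  have hna : ‖a‖ = Real.sin l₁' := by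
    rw [hs1, ← hna2, Real.sqrt_sq (norm_nonneg a)]
  have hnb : ‖b‖ = Real.sin l₂' := by
    rw [hs2, ← hnb2, Real.sqrt_sq (norm_nonneg b)]
  have hab : (inner ℝ a b : ℝ) = c₀ - c₁ * c₂ := by
    rw [ha, hb]
    simp only [inner_sub_left, inner_sub_right, real_inner_smul_left, real_inner_smul_right,
      hp2, hyp, hzp]
    rw [← hc₂, ← hc₀]; ring
  -- law of cosines
  have hlaw : Real.cos (sAngle p' y z) = (c₀ - c₁ * c₂) / (Real.sin l₁' * Real.sin l₂') := by
    rw [sAngle, InnerProductGeometry.cos_angle, ← ha, ← hb, hab, hna, hnb]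
  -- bound c₀
  have hl0pi : l₀' ≤ π := by rw [hl₀]; exact InnerProductGeometry.angle_le_pi y z
  have hc0le : c₀ ≤ Real.cos (l₁' + l₂' - 3 * ε) := by
    rw [← hcos0]
    exact Real.cos_le_cos_of_nonneg_of_le_pi (by linarith) hl0pi hdeg
  have hstep : Real.cos (sAngle p' y z) ≤
      -Real.cos (3 * ε) + (Real.cot l₁' + Real.cot l₂') * Real.sin (3 * ε) -
        Real.cot l₁' * Real.cot l₂' * (1 - Real.cos (3 * ε)) := by
    rw [hlaw]
    have hkey : -Real.cos (3 * ε) + (Real.cot l₁' + Real.cot l₂') * Real.sin (3 * ε) -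
        Real.cot l₁' * Real.cot l₂' * (1 - Real.cos (3 * ε)) =
        (Real.cos (l₁' + l₂' - 3 * ε) - c₁ * c₂) / (Real.sin l₁' * Real.sin l₂') := by
      rw [Real.cot_eq_cos_div_sin, Real.cot_eq_cos_div_sin, hcos1, hcos2,
        Real.cos_sub, Real.cos_add, Real.sin_add, hcos1, hcos2]
      field_simp
      ring
    rw [hkey]
    gcongr
  have hcotpos : 0 < Real.cot l₁' * Real.cot l₂' := by
    rw [Real.cot_eq_cos_div_sin, Real.cot_eq_cos_div_sin, hcos1, hcos2]
    positivity
  have h3εpos : 0 < 3 * ε := by linarith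
  have hsin3pos : 0 < Real.sin (3 * ε) := Real.sin_pos_of_pos_of_lt_pi h3εpos (by linarith)
  have hcos3lt : Real.cos (3 * ε) < 1 := by
    refine lt_of_le_of_ne (Real.cos_le_one _) fun h => ?_
    have := (Real.cos_eq_one_iff_of_lt_of_lt (x := 3 * ε) (by linarith) (by linarith)).1 h
    linarith
  have hK : 0 < Real.cot l₁' * Real.cot l₂' * (1 - Real.cos (3 * ε)) :=
    mul_pos hcotpos (by linarith)
  linarith
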